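/- The derivative f₀′ of the function f₀(x) = ln Γ(x+1) − ln √(2π) − (x + 1/2) ln x + x − (x/2) ln(x sinh(1/x)) − 7/(324 x³(35x² + 33)) tends to 0 as x → ∞; explicitly, ψ(x+1) − (1/2) ln(x sinh(1/x)) + (1/(2x)) coth(1/x) − ln x − 1/(2x) − 1/2 + (7/324)(175x² + 99)/(x⁴(35x² + 33)²) → 0 as x → ∞. -/

import Mathlib

/-- The digamma function `ψ = Γ'/Γ`. -/
noncomputable def digamma (x : ℝ) : ℝ := deriv Real.Gamma x / Real.Gamma x

open Filter Set Topology Real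

private lemma digamma_eq_deriv_log_Gamma {y : ℝ} (hy : 0 < y) :
    deriv (Real.log ∘ Real.Gamma) y = digamma y := by
  have hd : DifferentiableAt ℝ Real.Gamma y :=
    Real.differentiableAt_Gamma fun m =>
      ne_of_gt (lt_of_le_of_lt (by simpa using neg_nonpos.mpr m.cast_nonneg) hy)
  have := (hd.hasDerivAt.log (Real.Gamma_pos_of_pos hy).ne')
  simpa [digamma, Function.comp_def] using this.deriv

private lemma diffAt_logGamma {y : ℝ} (hy : 0 < y) :
    DifferentiableAt ℝ (Real.log ∘ Real.Gamma) y := by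
  exact (Real.differentiableAt_Gamma fun m =>
    ne_of_gt (lt_of_le_of_lt (by simpa using neg_nonpos.mpr m.cast_nonneg) hy)).log
    (Real.Gamma_pos_of_pos hy).ne'

private lemma logGamma_rec {y : ℝ} (hy : 0 < y) :
    (Real.log ∘ Real.Gamma) (y + 1) = (Real.log ∘ Real.Gamma) y + Real.log y := by
  simp only [Function.comp_apply, Real.Gamma_add_one hy.ne',
    Real.log_mul hy.ne' (Real.Gamma_pos_of_pos hy).ne', add_comm]

private lemma digamma_sub_log_tendsto :
    Tendsto (fun x : ℝ => digamma (x + 1) - Real.log x) atTop (nhds 0) := by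
  have hc : ConvexOn ℝ (Ioi 0) (Real.log ∘ Real.Gamma) := Real.convexOn_log_Gamma
  have hlb : ∀ x : ℝ, 0 < x → Real.log x ≤ digamma (x + 1) := by
    intro x hx
    rw [← digamma_eq_deriv_log_Gamma (by positivity)]
    refine (le_of_eq ?_).trans <| hc.slope_le_deriv (mem_Ioi.mpr hx)
      (mem_Ioi.mpr (by positivity)) (by linarith) (diffAt_logGamma (by positivity))
    rw [slope_def_field, show x + 1 - x = (1 : ℝ) by ring, div_one, logGamma_rec hx,
      add_sub_cancel_left]
  have hub : ∀ x : ℝ, 0 < x → digamma (x + 1) ≤ Real.log (x + 1) := by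
    intro x hx
    rw [← digamma_eq_deriv_log_Gamma (by positivity)]
    refine (hc.deriv_le_slope (mem_Ioi.mpr (by positivity : (0:ℝ) < x + 1))
      (mem_Ioi.mpr (by positivity : (0:ℝ) < x + 2)) (by linarith)
      (diffAt_logGamma (by positivity))).trans (le_of_eq ?_)
    rw [slope_def_field, show x + 2 - (x + 1) = (1 : ℝ) by ring, div_one,
      show x + 2 = (x + 1) + 1 by ring, logGamma_rec (by positivity : (0:ℝ) < x + 1),
      add_sub_cancel_left]
  have hinv : Tendsto (fun x : ℝ => 1 / x) atTop (nhds 0) := by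
    simpa only [one_div] using tendsto_inv_atTop_zero
  have hh : Tendsto (fun x : ℝ => Real.log (1 + 1 / x)) atTop (nhds 0) := by
    have h1 : Tendsto (fun x : ℝ => 1 + 1 / x) atTop (nhds 1) := by
      simpa using tendsto_const_nhds.add hinv
    have := (Real.continuousAt_log one_ne_zero).tendsto.comp h1
    simpa [Function.comp_def] using this
  refine tendsto_of_tendsto_of_tendsto_of_le_of_le' tendsto_const_nhds hh ?_ ?_
  · filter_upwards [eventually_gt_atTop (0:ℝ)] with x hx
    linarith [hlb x hx]
  · filter_upwards [eventually_gt_atTop (0:ℝ)] with x hx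
    have := hub x hx
    have heq : Real.log (x + 1) - Real.log x = Real.log (1 + 1 / x) := by
      rw [← Real.log_div (by positivity) hx.ne']
      congr 1
      field_simp
    linarith [heq ▸ (by linarith : digamma (x + 1) - Real.log x ≤ Real.log (x+1) - Real.log x)]

theorem f₀_deriv_tendsto_zero :
    Filter.Tendsto
      (fun x : ℝ =>
        digamma (x + 1) - 1 / 2 * Real.log (x * Real.sinh (1 / x))
          + 1 / (2 * x) * (Real.cosh (1 / x) / Real.sinh (1 / x))
          - Real.log x - 1 / (2 * x) - 1 / 2
          + 7 / 324 * ((175 * x ^ 2 + 99) / (x ^ 4 * (35 * x ^ 2 + 33) ^ 2)))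
      Filter.atTop (nhds 0) := by
  have hinv : Tendsto (fun x : ℝ => 1 / x) atTop (nhds 0) := by
    simpa only [one_div] using tendsto_inv_atTop_zero
  -- x * sinh (1/x) → 1
  have hs : Tendsto (fun x : ℝ => x * Real.sinh (1 / x)) atTop (nhds 1) := by
    have hslope : Tendsto (fun t : ℝ => Real.sinh t / t) (nhdsWithin 0 {(0:ℝ)}ᶜ) (nhds 1) := by
      have := hasDerivAt_iff_tendsto_slope.mp (Real.hasDerivAt_sinh 0)
      simp only [Real.cosh_zero] at this
      refine this.congr fun t => ?_
      simp [slope_def_field, Real.sinh_zero]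
    have hinv' : Tendsto (fun x : ℝ => 1 / x) atTop (nhdsWithin 0 {(0:ℝ)}ᶜ) := by
      refine tendsto_nhdsWithin_of_tendsto_nhds_of_eventually_within _ hinv ?_
      filter_upwards [eventually_gt_atTop (0:ℝ)] with x hx
      simp only [mem_compl_iff, mem_singleton_iff]
      positivity
    have := hslope.comp hinv'
    refine this.congr' ?_
    filter_upwards [eventually_gt_atTop (0:ℝ)] with x hx
    simp only [Function.comp_def]
    field_simp
  -- cosh (1/x) → 1
  have hch : Tendsto (fun x : ℝ => Real.cosh (1 / x)) atTop (nhds 1) := by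
    have := (Real.continuous_cosh.continuousAt (x := (0:ℝ))).tendsto.comp hinv
    simpa [Function.comp_def, Real.cosh_zero] using this
  -- log (x * sinh (1/x)) → 0
  have hlog : Tendsto (fun x : ℝ => 1 / 2 * Real.log (x * Real.sinh (1 / x))) atTop (nhds 0) := by
    have := (Real.continuousAt_log one_ne_zero).tendsto.comp hs
    simpa [Function.comp_def] using tendsto_const_nhds.mul this
  -- coth term → 1/2
  have hcoth : Tendsto (fun x : ℝ => 1 / (2 * x) * (Real.cosh (1 / x) / Real.sinh (1 / x)))
      atTop (nhds (1 / 2)) := by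
    have hden : Tendsto (fun x : ℝ => 2 * (x * Real.sinh (1 / x))) atTop (nhds 2) := by
      simpa using tendsto_const_nhds.mul hs
    have hdiv := hch.div hden two_ne_zero
    rw [show (1:ℝ)/2 = 1/2 by norm_num]
    refine Tendsto.congr' ?_ hdiv
    filter_upwards [eventually_gt_atTop (0:ℝ)] with x hx
    have hsx : Real.sinh (1 / x) ≠ 0 := Real.sinh_ne_zero.mpr (by positivity)
    simp only [Pi.div_apply]
    rw [div_mul_div_comm, one_mul, div_eq_div_iff
      (mul_ne_zero two_ne_zero (mul_ne_zero hx.ne' hsx))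
      (mul_ne_zero (mul_ne_zero two_ne_zero hx.ne') hsx)]
    ring
  -- 1/(2x) → 0
  have h2x : Tendsto (fun x : ℝ => 1 / (2 * x)) atTop (nhds 0) := by
    have : Tendsto (fun x : ℝ => 2 * x) atTop atTop :=
      Tendsto.const_mul_atTop two_pos tendsto_id
    exact this.inv_tendsto_atTop.congr fun x => by simp [Pi.inv_apply, one_div]
  -- rational term → 0
  have hrat : Tendsto (fun x : ℝ =>
      7 / 324 * ((175 * x ^ 2 + 99) / (x ^ 4 * (35 * x ^ 2 + 33) ^ 2))) atTop (nhds 0) := by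
    have hg' : Tendsto (fun t : ℝ => (175 * t ^ 6 + 99 * t ^ 8) / (35 + 33 * t ^ 2) ^ 2)
        (nhds 0) (nhds 0) := by
      have hc : ContinuousAt (fun t : ℝ => (175 * t ^ 6 + 99 * t ^ 8) / (35 + 33 * t ^ 2) ^ 2)
          0 := by
        apply ContinuousAt.div (by fun_prop) (by fun_prop)
        norm_num
      simpa using hc.tendsto
    have hcomp := hg'.comp hinv
    have : Tendsto (fun x : ℝ => (175 * x ^ 2 + 99) / (x ^ 4 * (35 * x ^ 2 + 33) ^ 2))
        atTop (nhds 0) := by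
      refine hcomp.congr' ?_
      filter_upwards [eventually_gt_atTop (0:ℝ)] with x hx
      have hx8 : x ^ 8 ≠ 0 := by positivity
      have hden : x ^ 4 * (35 * x ^ 2 + 33) ^ 2 ≠ 0 := by positivity
      have hden2 : (35 + 33 * (1 / x) ^ 2) ^ 2 ≠ 0 := by positivity
      simp only [Function.comp_apply]
      field_simp [Function.comp_def]
    simpa using tendsto_const_nhds.mul this
  have total := ((((digamma_sub_log_tendsto.sub hlog).add hcoth).sub h2x).sub
    (tendsto_const_nhds : Tendsto (fun _ : ℝ => (1:ℝ)/2) atTop (nhds (1/2)))).add hrat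
  have : (0:ℝ) - 0 + 1 / 2 - 0 - 1 / 2 + 0 = 0 := by norm_num
  rw [this] at total
  refine total.congr fun x => by ring
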